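/- Let m > 1, let b₀, b₃ > 0 and b₂ ∈ ℝ with b₀² + b₂² + b₃² = 1, and define ψ : ℝ² → ℝ⁶ by ψ(u,v) = (−√(m²−1) u, b₀ cos(m u / b₀), b₀ sin(m u / b₀), b₂, b₃ sin(v/b₃), b₃ cos(v/b₃)). Let ν(u,v) := (0, ψ₂, ψ₃, ψ₄, ψ₅, ψ₆)(u,v) and W := ∂²ψ/∂u² + ∂²ψ/∂v² + (m²+1) ν. Then at every point: ⟨W, ∂ψ/∂u⟩ = 0 and ⟨W, ∂ψ/∂v⟩ = 0 with respect to the Lorentzian inner product ⟨x,y⟩ = −x₁y₁ + Σ_{i=2}^{6} xᵢyᵢ, and ∂W/∂v = ((m²+1) − 1/b₃²) · ∂ψ/∂v. -/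

import Mathlib

open Real

/-- The Lorentzian (Minkowski) inner product `⟨x,y⟩ = -x₁y₁ + ∑_{i=2}^{6} xᵢyᵢ` on `ℝ⁶`. -/
noncomputable def lorentz6 (x y : Fin 6 → ℝ) : ℝ :=
  -(x 0 * y 0) + x 1 * y 1 + x 2 * y 2 + x 3 * y 3 + x 4 * y 4 + x 5 * y 5

/-- The candidate surface `ψ` in `𝔼¹₁ × S⁴ ⊂ ℝ⁶` from the proof of Theorem 6.1. -/
noncomputable def psiRS (m b₀ b₂ b₃ : ℝ) (u v : ℝ) : Fin 6 → ℝ :=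
  ![-(Real.sqrt (m ^ 2 - 1)) * u,
    b₀ * Real.cos (m * u / b₀),
    b₀ * Real.sin (m * u / b₀),
    b₂,
    b₃ * Real.sin (v / b₃),
    b₃ * Real.cos (v / b₃)]

/-- The position vector `ν = (0, ψ₂, …, ψ₆)` in the `S⁴` factor. -/
noncomputable def nuRS (m b₀ b₂ b₃ : ℝ) (u v : ℝ) : Fin 6 → ℝ := fun i =>
  if i = 0 then 0 else psiRS m b₀ b₂ b₃ u v i

/-- `W = ψ_uu + ψ_vv + (m²+1) ν`, twice the mean curvature vector of `ψ` in `𝔼¹₁ × S⁴`. -/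
noncomputable def WRS (m b₀ b₂ b₃ : ℝ) (u v : ℝ) : Fin 6 → ℝ := fun i =>
  deriv (fun u' => deriv (fun u'' => psiRS m b₀ b₂ b₃ u'' v i) u') u +
    deriv (fun v' => deriv (fun v'' => psiRS m b₀ b₂ b₃ u v'' i) v') v +
    (m ^ 2 + 1) * nuRS m b₀ b₂ b₃ u v i

private lemma hdcos (a c d x : ℝ) :
    HasDerivAt (fun x => a * Real.cos (c * x / d)) (-(a * c / d) * Real.sin (c * x / d)) x := by
  have h := ((((hasDerivAt_id x).const_mul c).div_const d).cos).const_mul a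
  refine h.congr_deriv ?_
  simp only [id_eq]
  ring

private lemma hdsin (a c d x : ℝ) :
    HasDerivAt (fun x => a * Real.sin (c * x / d)) ((a * c / d) * Real.cos (c * x / d)) x := by
  have h := ((((hasDerivAt_id x).const_mul c).div_const d).sin).const_mul a
  refine h.congr_deriv ?_
  simp only [id_eq]
  ring

section comps
variable (m b₀ b₂ b₃ u v : ℝ)

private lemma psi0 : psiRS m b₀ b₂ b₃ u v 0 = -(Real.sqrt (m ^ 2 - 1)) * u := rfl
private lemma psi1 : psiRS m b₀ b₂ b₃ u v 1 = b₀ * Real.cos (m * u / b₀) := rfl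
private lemma psi2 : psiRS m b₀ b₂ b₃ u v 2 = b₀ * Real.sin (m * u / b₀) := rfl
private lemma psi3 : psiRS m b₀ b₂ b₃ u v 3 = b₂ := rfl
private lemma psi4 : psiRS m b₀ b₂ b₃ u v 4 = b₃ * Real.sin (v / b₃) := rfl
private lemma psi5 : psiRS m b₀ b₂ b₃ u v 5 = b₃ * Real.cos (v / b₃) := rfl

private lemma nu0 : nuRS m b₀ b₂ b₃ u v 0 = 0 := rfl
private lemma nu1 : nuRS m b₀ b₂ b₃ u v 1 = b₀ * Real.cos (m * u / b₀) := rfl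
private lemma nu2 : nuRS m b₀ b₂ b₃ u v 2 = b₀ * Real.sin (m * u / b₀) := rfl
private lemma nu3 : nuRS m b₀ b₂ b₃ u v 3 = b₂ := rfl
private lemma nu4 : nuRS m b₀ b₂ b₃ u v 4 = b₃ * Real.sin (v / b₃) := rfl
private lemma nu5 : nuRS m b₀ b₂ b₃ u v 5 = b₃ * Real.cos (v / b₃) := rfl

-- first u-derivatives
private lemma dU0 : deriv (fun t => psiRS m b₀ b₂ b₃ t v 0) u = -(Real.sqrt (m ^ 2 - 1)) := by
  simp only [psi0]
  simpa using ((hasDerivAt_id u).const_mul (-(Real.sqrt (m ^ 2 - 1)))).deriv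

private lemma dU1 : deriv (fun t => psiRS m b₀ b₂ b₃ t v 1) u
    = -(b₀ * m / b₀) * Real.sin (m * u / b₀) := by
  simp only [psi1]; exact (hdcos b₀ m b₀ u).deriv

private lemma dU2 : deriv (fun t => psiRS m b₀ b₂ b₃ t v 2) u
    = (b₀ * m / b₀) * Real.cos (m * u / b₀) := by
  simp only [psi2]; exact (hdsin b₀ m b₀ u).deriv

private lemma dU3 : deriv (fun t => psiRS m b₀ b₂ b₃ t v 3) u = 0 := by
  simp only [psi3]; exact deriv_const u b₂

private lemma dU4 : deriv (fun t => psiRS m b₀ b₂ b₃ t v 4) u = 0 := by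
  simp only [psi4]; exact deriv_const u _

private lemma dU5 : deriv (fun t => psiRS m b₀ b₂ b₃ t v 5) u = 0 := by
  simp only [psi5]; exact deriv_const u _

-- first v-derivatives
private lemma dV0 : deriv (fun t => psiRS m b₀ b₂ b₃ u t 0) v = 0 := by
  simp only [psi0]; exact deriv_const v _

private lemma dV1 : deriv (fun t => psiRS m b₀ b₂ b₃ u t 1) v = 0 := by
  simp only [psi1]; exact deriv_const v _

private lemma dV2 : deriv (fun t => psiRS m b₀ b₂ b₃ u t 2) v = 0 := by
  simp only [psi2]; exact deriv_const v _

private lemma dV3 : deriv (fun t => psiRS m b₀ b₂ b₃ u t 3) v = 0 := by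
  simp only [psi3]; exact deriv_const v _

private lemma dV4 : deriv (fun t => psiRS m b₀ b₂ b₃ u t 4) v
    = (b₃ * 1 / b₃) * Real.cos (1 * v / b₃) := by
  simp only [psi4]
  have : (fun t => b₃ * Real.sin (t / b₃)) = fun t => b₃ * Real.sin (1 * t / b₃) := by
    funext t; rw [one_mul]
  rw [this]; exact (hdsin b₃ 1 b₃ v).deriv

private lemma dV5 : deriv (fun t => psiRS m b₀ b₂ b₃ u t 5) v
    = -(b₃ * 1 / b₃) * Real.sin (1 * v / b₃) := by
  simp only [psi5]
  have : (fun t => b₃ * Real.cos (t / b₃)) = fun t => b₃ * Real.cos (1 * t / b₃) := by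
    funext t; rw [one_mul]
  rw [this]; exact (hdcos b₃ 1 b₃ v).deriv

-- second u-derivatives
private lemma ddU0 : deriv (fun u' => deriv (fun t => psiRS m b₀ b₂ b₃ t v 0) u') u = 0 := by
  have h : (fun u' => deriv (fun t => psiRS m b₀ b₂ b₃ t v 0) u')
      = fun _ => -(Real.sqrt (m ^ 2 - 1)) := funext fun x => dU0 m b₀ b₂ b₃ x v
  rw [h]; exact deriv_const u _

private lemma ddU1 : deriv (fun u' => deriv (fun t => psiRS m b₀ b₂ b₃ t v 1) u') u
    = (-(b₀ * m / b₀) * m / b₀) * Real.cos (m * u / b₀) := by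
  have h : (fun u' => deriv (fun t => psiRS m b₀ b₂ b₃ t v 1) u')
      = fun u' => -(b₀ * m / b₀) * Real.sin (m * u' / b₀) := funext fun x => dU1 m b₀ b₂ b₃ x v
  rw [h]; exact (hdsin (-(b₀ * m / b₀)) m b₀ u).deriv

private lemma ddU2 : deriv (fun u' => deriv (fun t => psiRS m b₀ b₂ b₃ t v 2) u') u
    = -((b₀ * m / b₀) * m / b₀) * Real.sin (m * u / b₀) := by
  have h : (fun u' => deriv (fun t => psiRS m b₀ b₂ b₃ t v 2) u')
      = fun u' => (b₀ * m / b₀) * Real.cos (m * u' / b₀) := funext fun x => dU2 m b₀ b₂ b₃ x v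
  rw [h]; exact (hdcos (b₀ * m / b₀) m b₀ u).deriv

private lemma ddU3 : deriv (fun u' => deriv (fun t => psiRS m b₀ b₂ b₃ t v 3) u') u = 0 := by
  have h : (fun u' => deriv (fun t => psiRS m b₀ b₂ b₃ t v 3) u') = fun _ => (0 : ℝ) :=
    funext fun x => dU3 m b₀ b₂ b₃ x v
  rw [h]; exact deriv_const u _

private lemma ddU4 : deriv (fun u' => deriv (fun t => psiRS m b₀ b₂ b₃ t v 4) u') u = 0 := by
  have h : (fun u' => deriv (fun t => psiRS m b₀ b₂ b₃ t v 4) u') = fun _ => (0 : ℝ) :=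
    funext fun x => dU4 m b₀ b₂ b₃ x v
  rw [h]; exact deriv_const u _

private lemma ddU5 : deriv (fun u' => deriv (fun t => psiRS m b₀ b₂ b₃ t v 5) u') u = 0 := by
  have h : (fun u' => deriv (fun t => psiRS m b₀ b₂ b₃ t v 5) u') = fun _ => (0 : ℝ) :=
    funext fun x => dU5 m b₀ b₂ b₃ x v
  rw [h]; exact deriv_const u _

-- second v-derivatives
private lemma ddV0 : deriv (fun v' => deriv (fun t => psiRS m b₀ b₂ b₃ u t 0) v') v = 0 := by
  have h : (fun v' => deriv (fun t => psiRS m b₀ b₂ b₃ u t 0) v') = fun _ => (0 : ℝ) :=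
    funext fun x => dV0 m b₀ b₂ b₃ u x
  rw [h]; exact deriv_const v _

private lemma ddV1 : deriv (fun v' => deriv (fun t => psiRS m b₀ b₂ b₃ u t 1) v') v = 0 := by
  have h : (fun v' => deriv (fun t => psiRS m b₀ b₂ b₃ u t 1) v') = fun _ => (0 : ℝ) :=
    funext fun x => dV1 m b₀ b₂ b₃ u x
  rw [h]; exact deriv_const v _

private lemma ddV2 : deriv (fun v' => deriv (fun t => psiRS m b₀ b₂ b₃ u t 2) v') v = 0 := by
  have h : (fun v' => deriv (fun t => psiRS m b₀ b₂ b₃ u t 2) v') = fun _ => (0 : ℝ) :=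
    funext fun x => dV2 m b₀ b₂ b₃ u x
  rw [h]; exact deriv_const v _

private lemma ddV3 : deriv (fun v' => deriv (fun t => psiRS m b₀ b₂ b₃ u t 3) v') v = 0 := by
  have h : (fun v' => deriv (fun t => psiRS m b₀ b₂ b₃ u t 3) v') = fun _ => (0 : ℝ) :=
    funext fun x => dV3 m b₀ b₂ b₃ u x
  rw [h]; exact deriv_const v _

private lemma ddV4 : deriv (fun v' => deriv (fun t => psiRS m b₀ b₂ b₃ u t 4) v') v
    = -((b₃ * 1 / b₃) * 1 / b₃) * Real.sin (1 * v / b₃) := by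
  have h : (fun v' => deriv (fun t => psiRS m b₀ b₂ b₃ u t 4) v')
      = fun v' => (b₃ * 1 / b₃) * Real.cos (1 * v' / b₃) := funext fun x => dV4 m b₀ b₂ b₃ u x
  rw [h]; exact (hdcos (b₃ * 1 / b₃) 1 b₃ v).deriv

private lemma ddV5 : deriv (fun v' => deriv (fun t => psiRS m b₀ b₂ b₃ u t 5) v') v
    = (-(b₃ * 1 / b₃) * 1 / b₃) * Real.cos (1 * v / b₃) := by
  have h : (fun v' => deriv (fun t => psiRS m b₀ b₂ b₃ u t 5) v')
      = fun v' => -(b₃ * 1 / b₃) * Real.sin (1 * v' / b₃) := funext fun x => dV5 m b₀ b₂ b₃ u x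
  rw [h]; exact (hdsin (-(b₃ * 1 / b₃)) 1 b₃ v).deriv

-- W components
private lemma W0 : WRS m b₀ b₂ b₃ u v 0 = 0 := by
  show deriv _ u + deriv _ v + (m ^ 2 + 1) * nuRS m b₀ b₂ b₃ u v 0 = 0
  rw [ddU0, ddV0, nu0]; ring

private lemma W1 : WRS m b₀ b₂ b₃ u v 1
    = ((-(b₀ * m / b₀) * m / b₀) + (m ^ 2 + 1) * b₀) * Real.cos (m * u / b₀) := by
  show deriv _ u + deriv _ v + (m ^ 2 + 1) * nuRS m b₀ b₂ b₃ u v 1 = _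
  rw [ddU1, ddV1, nu1]; ring

private lemma W2 : WRS m b₀ b₂ b₃ u v 2
    = ((-(b₀ * m / b₀) * m / b₀) + (m ^ 2 + 1) * b₀) * Real.sin (m * u / b₀) := by
  show deriv _ u + deriv _ v + (m ^ 2 + 1) * nuRS m b₀ b₂ b₃ u v 2 = _
  rw [ddU2, ddV2, nu2]; ring

private lemma W3 : WRS m b₀ b₂ b₃ u v 3 = (m ^ 2 + 1) * b₂ := by
  show deriv _ u + deriv _ v + (m ^ 2 + 1) * nuRS m b₀ b₂ b₃ u v 3 = _
  rw [ddU3, ddV3, nu3]; ring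

private lemma W4 : WRS m b₀ b₂ b₃ u v 4
    = ((-(b₃ * 1 / b₃) * 1 / b₃) + (m ^ 2 + 1) * b₃) * Real.sin (1 * v / b₃) := by
  show deriv _ u + deriv _ v + (m ^ 2 + 1) * nuRS m b₀ b₂ b₃ u v 4 = _
  rw [ddU4, ddV4, nu4, one_mul]; ring

private lemma W5 : WRS m b₀ b₂ b₃ u v 5
    = ((-(b₃ * 1 / b₃) * 1 / b₃) + (m ^ 2 + 1) * b₃) * Real.cos (1 * v / b₃) := by
  show deriv _ u + deriv _ v + (m ^ 2 + 1) * nuRS m b₀ b₂ b₃ u v 5 = _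
  rw [ddU5, ddV5, nu5, one_mul]; ring

end comps

/-- `W` is normal to the surface and its `v`-derivative is tangential:
`⟨W,ψ_u⟩ = 0`, `⟨W,ψ_v⟩ = 0` and `∂W/∂v = ((m²+1) − 1/b₃²)·ψ_v`. -/
theorem WRS_normal_and_v_derivative (m b₀ b₂ b₃ : ℝ) (hm : 1 < m)
    (hb₀ : 0 < b₀) (hb₃ : 0 < b₃)
    (hrel : b₀ ^ 2 + b₂ ^ 2 + b₃ ^ 2 = 1) :
    ∀ u v : ℝ,
      lorentz6 (WRS m b₀ b₂ b₃ u v)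
        (fun i => deriv (fun u' => psiRS m b₀ b₂ b₃ u' v i) u) = 0 ∧
      lorentz6 (WRS m b₀ b₂ b₃ u v)
        (fun i => deriv (fun v' => psiRS m b₀ b₂ b₃ u v' i) v) = 0 ∧
      (∀ i : Fin 6, deriv (fun v' => WRS m b₀ b₂ b₃ u v' i) v =
        ((m ^ 2 + 1) - 1 / b₃ ^ 2) * deriv (fun v' => psiRS m b₀ b₂ b₃ u v' i) v) := by
  have hb₀' : b₀ ≠ 0 := ne_of_gt hb₀
  have hb₃' : b₃ ≠ 0 := ne_of_gt hb₃
  intro u v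
  refine ⟨?_, ?_, ?_⟩
  · unfold lorentz6
    beta_reduce
    rw [W0, W1, W2, W3, W4, W5, dU0, dU1, dU2, dU3, dU4, dU5]
    ring
  · unfold lorentz6
    beta_reduce
    rw [W0, W1, W2, W3, W4, W5, dV0, dV1, dV2, dV3, dV4, dV5]
    ring
  · intro i
    fin_cases i
    · show deriv (fun v' => WRS m b₀ b₂ b₃ u v' 0) v =
          ((m ^ 2 + 1) - 1 / b₃ ^ 2) * deriv (fun v' => psiRS m b₀ b₂ b₃ u v' 0) v
      have h : (fun v' => WRS m b₀ b₂ b₃ u v' 0) = fun _ => (0 : ℝ) :=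
        funext fun x => W0 m b₀ b₂ b₃ u x
      rw [h, deriv_const, dV0]; ring
    · show deriv (fun v' => WRS m b₀ b₂ b₃ u v' 1) v =
          ((m ^ 2 + 1) - 1 / b₃ ^ 2) * deriv (fun v' => psiRS m b₀ b₂ b₃ u v' 1) v
      have h : (fun v' => WRS m b₀ b₂ b₃ u v' 1)
          = fun _ => ((-(b₀ * m / b₀) * m / b₀) + (m ^ 2 + 1) * b₀) * Real.cos (m * u / b₀) :=
        funext fun x => W1 m b₀ b₂ b₃ u x
      rw [h, deriv_const, dV1]; ring
    · show deriv (fun v' => WRS m b₀ b₂ b₃ u v' 2) v =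
          ((m ^ 2 + 1) - 1 / b₃ ^ 2) * deriv (fun v' => psiRS m b₀ b₂ b₃ u v' 2) v
      have h : (fun v' => WRS m b₀ b₂ b₃ u v' 2)
          = fun _ => ((-(b₀ * m / b₀) * m / b₀) + (m ^ 2 + 1) * b₀) * Real.sin (m * u / b₀) :=
        funext fun x => W2 m b₀ b₂ b₃ u x
      rw [h, deriv_const, dV2]; ring
    · show deriv (fun v' => WRS m b₀ b₂ b₃ u v' 3) v =
          ((m ^ 2 + 1) - 1 / b₃ ^ 2) * deriv (fun v' => psiRS m b₀ b₂ b₃ u v' 3) v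
      have h : (fun v' => WRS m b₀ b₂ b₃ u v' 3) = fun _ => (m ^ 2 + 1) * b₂ :=
        funext fun x => W3 m b₀ b₂ b₃ u x
      rw [h, deriv_const, dV3]; ring
    · show deriv (fun v' => WRS m b₀ b₂ b₃ u v' 4) v =
          ((m ^ 2 + 1) - 1 / b₃ ^ 2) * deriv (fun v' => psiRS m b₀ b₂ b₃ u v' 4) v
      have h : (fun v' => WRS m b₀ b₂ b₃ u v' 4)
          = fun v' => ((-(b₃ * 1 / b₃) * 1 / b₃) + (m ^ 2 + 1) * b₃) * Real.sin (1 * v' / b₃) :=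
        funext fun x => W4 m b₀ b₂ b₃ u x
      rw [h, (hdsin _ 1 b₃ v).deriv, dV4]
      field_simp
      ring
    · show deriv (fun v' => WRS m b₀ b₂ b₃ u v' 5) v =
          ((m ^ 2 + 1) - 1 / b₃ ^ 2) * deriv (fun v' => psiRS m b₀ b₂ b₃ u v' 5) v
      have h : (fun v' => WRS m b₀ b₂ b₃ u v' 5)
          = fun v' => ((-(b₃ * 1 / b₃) * 1 / b₃) + (m ^ 2 + 1) * b₃) * Real.cos (1 * v' / b₃) :=
        funext fun x => W5 m b₀ b₂ b₃ u x
      rw [h, (hdcos _ 1 b₃ v).deriv, dV5]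
      field_simp
      ring
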